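/- Let s ∈ [2,∞) and n ∈ ℕ*. Then there exists a constant C > 0 depending only on s such that for all x, y ∈ ℝⁿ, (‖x‖^(s-2)x − ‖y‖^(s-2)y) · (x − y) ≥ C·‖x − y‖^s, i.e., the s-power-framed function is Hölder monotone in the sense of equation (eq:s.power:strong.mono) with s̃ = 2. -/

import Mathlib

open Real

/-- Hölder monotonicity (coercivity) of the `s`-power-framed function
`x ↦ ‖x‖^(s-2) x` for `s ≥ 2`, with a constant depending only on `s`. -/
theorem s_power_framed_holder_monotonicity (s : ℝ) (hs : 2 ≤ s) :
    ∃ C > 0, ∀ (n : ℕ), 0 < n → ∀ x y : EuclideanSpace ℝ (Fin n),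
      (inner ℝ ((‖x‖ ^ (s - 2)) • x - (‖y‖ ^ (s - 2)) • y) (x - y) : ℝ) ≥
        C * ‖x - y‖ ^ s := by
  have hs0 : s ≠ 0 := by linarith
  refine ⟨2 ^ (1 - s), by positivity, fun n hn x y => ?_⟩
  by_cases hxy : x = y
  · simp [hxy, Real.zero_rpow hs0]
  have hd : 0 < ‖x - y‖ := by
    rw [norm_pos_iff, sub_ne_zero]; exact hxy
  set a := ‖x‖ with ha
  set b := ‖y‖ with hb
  set A := a ^ (s - 2) with hA
  set B := b ^ (s - 2) with hB
  set d := ‖x - y‖ with hdd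
  have ha0 : 0 ≤ a := norm_nonneg _
  have hb0 : 0 ≤ b := norm_nonneg _
  have hA0 : 0 ≤ A := Real.rpow_nonneg ha0 _
  have hB0 : 0 ≤ B := Real.rpow_nonneg hb0 _
  have hs2 : 0 ≤ s - 2 := by linarith
  have hinner : (inner ℝ (A • x - B • y) (x - y) : ℝ)
      = A * a ^ 2 + B * b ^ 2 - (A + B) * inner ℝ x y := by
    have hxy' : (inner ℝ y x : ℝ) = inner ℝ x y := real_inner_comm x y
    simp only [inner_sub_left, inner_sub_right, real_inner_smul_left,
      real_inner_self_eq_norm_sq, hxy']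
    ring
  have hd2 : d ^ 2 = a ^ 2 + b ^ 2 - 2 * inner ℝ x y := by
    rw [hdd, ha, hb, @norm_sub_sq_real]; ring
  -- Step 1: inner ≥ (1/2)(A+B) d^2
  have step1 : (inner ℝ (A • x - B • y) (x - y) : ℝ) ≥ (1 / 2) * (A + B) * d ^ 2 := by
    rw [hinner, hd2]
    have key : 0 ≤ (A - B) * (a ^ 2 - b ^ 2) := by
      rcases le_total a b with h | h
      · have h1 : A ≤ B := Real.rpow_le_rpow ha0 h hs2
        have h2 : a ^ 2 ≤ b ^ 2 := by nlinarith
        nlinarith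
      · have h1 : B ≤ A := Real.rpow_le_rpow hb0 h hs2
        have h2 : b ^ 2 ≤ a ^ 2 := by nlinarith
        nlinarith
    nlinarith
  -- Step 2: d ^ (s-2) ≤ 2 ^ (s-2) * (A + B)
  have step2 : d ^ (s - 2) ≤ 2 ^ (s - 2) * (A + B) := by
    have hdab : d ≤ a + b := norm_sub_le x y
    rcases le_total a b with h | h
    · have h1 : d ≤ 2 * b := by linarith
      calc d ^ (s - 2) ≤ (2 * b) ^ (s - 2) :=
            Real.rpow_le_rpow hd.le h1 hs2
        _ = 2 ^ (s - 2) * B := Real.mul_rpow (by norm_num) hb0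
        _ ≤ 2 ^ (s - 2) * (A + B) := by
            have : (0:ℝ) ≤ 2 ^ (s - 2) := by positivity
            nlinarith
    · have h1 : d ≤ 2 * a := by linarith
      calc d ^ (s - 2) ≤ (2 * a) ^ (s - 2) :=
            Real.rpow_le_rpow hd.le h1 hs2
        _ = 2 ^ (s - 2) * A := Real.mul_rpow (by norm_num) ha0
        _ ≤ 2 ^ (s - 2) * (A + B) := by
            have : (0:ℝ) ≤ 2 ^ (s - 2) := by positivity
            nlinarith
  -- Step 3: combine
  have hds : d ^ s = d ^ (s - 2) * d ^ 2 := by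
    rw [← Real.rpow_natCast d 2, ← Real.rpow_add hd]
    norm_num
  have hpow2 : (2:ℝ) ^ (1 - s) * 2 ^ (s - 2) = 1 / 2 := by
    rw [← Real.rpow_add (by norm_num : (0:ℝ) < 2),
      show (1:ℝ) - s + (s - 2) = -1 by ring, Real.rpow_neg_one]
    norm_num
  have : (2:ℝ) ^ (1 - s) * d ^ s ≤ (1 / 2) * (A + B) * d ^ 2 := by
    have hd20 : (0:ℝ) ≤ d ^ 2 := by positivity
    have h2s : (0:ℝ) ≤ 2 ^ (1 - s) := by positivity
    calc (2:ℝ) ^ (1 - s) * d ^ s = 2 ^ (1 - s) * d ^ (s - 2) * d ^ 2 := by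
            rw [hds]; ring
      _ ≤ 2 ^ (1 - s) * (2 ^ (s - 2) * (A + B)) * d ^ 2 :=
            mul_le_mul_of_nonneg_right (mul_le_mul_of_nonneg_left step2 h2s) hd20
      _ = (1 / 2) * (A + B) * d ^ 2 := by rw [← mul_assoc, hpow2]
  linarith [step1]
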